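/- For every z ∈ ℂ with Re(z) ≠ 0, the forward orbit of z under P_0 is well defined (it never meets 0, since each open half plane is forward invariant) and tends to infinity: |P_0⁽ⁿ⁾(z)| → ∞ as n → ∞, where P_0⁽ⁿ⁾ denotes the n-th iterate. That is, both the right and the left open half planes are contained in the basin of attraction of the fixed point at infinity. -/

import Mathlib

open Filter

noncomputable def P₀ (z : ℂ) : ℂ := z + 1/z

lemma P0_re (w : ℂ) : (P₀ w).re = w.re * (1 + 1 / Complex.normSq w) := by
  by_cases hw : w = 0
  · simp [P₀, hw]
  · have hs : Complex.normSq w ≠ 0 := (Complex.normSq_pos.mpr hw).ne'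
    simp only [P₀, Complex.add_re, one_div, Complex.inv_re]
    field_simp

lemma P0_im (w : ℂ) : (P₀ w).im = w.im * (1 - 1 / Complex.normSq w) := by
  by_cases hw : w = 0
  · simp [P₀, hw]
  · have hs : Complex.normSq w ≠ 0 := (Complex.normSq_pos.mpr hw).ne'
    simp only [P₀, Complex.add_im, one_div, Complex.inv_im]
    field_simp
    ring

lemma P0_normSq (w : ℂ) (hw : w ≠ 0) :
    Complex.normSq (P₀ w) =
      Complex.normSq w - 2 + (4 * w.re ^ 2 + 1) / Complex.normSq w := by
  have hs : Complex.normSq w ≠ 0 := (Complex.normSq_pos.mpr hw).ne'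
  have h1 : Complex.normSq w = w.re ^ 2 + w.im ^ 2 := by
    rw [Complex.normSq_apply]; ring
  have hs' : w.re ^ 2 + w.im ^ 2 ≠ 0 := h1 ▸ hs
  rw [Complex.normSq_apply, P0_re, P0_im, h1]
  field_simp
  ring

/-- For every `z` with `Re(z) ≠ 0`, the forward orbit of `z` under `P_0` never meets `0`
and tends to infinity: both open half planes are contained in the basin of attraction
of the fixed point at infinity. -/
theorem P0_half_planes_in_basin_of_infinity (z : ℂ) (hz : z.re ≠ 0) :
    (∀ n : ℕ, P₀^[n] z ≠ 0) ∧
    Tendsto (fun n : ℕ => ‖P₀^[n] z‖) atTop atTop := by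
  set f : ℕ → ℂ := fun n => P₀^[n] z with hf
  have hstep : ∀ n, f (n + 1) = P₀ (f n) := fun n =>
    Function.iterate_succ_apply' P₀ n z
  -- real parts never vanish
  have hre : ∀ n, (f n).re ≠ 0 := by
    intro n
    induction n with
    | zero => simpa [hf] using hz
    | succ n ih =>
      have hne : f n ≠ 0 := fun h => ih (by simp [h])
      have hs : 0 < Complex.normSq (f n) := Complex.normSq_pos.mpr hne
      rw [hstep n, P0_re]
      have h1 : 0 < 1 + 1 / Complex.normSq (f n) := by
        have := one_div_pos.mpr hs; linarith
      exact mul_ne_zero ih h1.ne'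
  have hne : ∀ n, f n ≠ 0 := fun n h => hre n (by simp [h])
  refine ⟨hne, ?_⟩
  set r : ℕ → ℝ := fun n => |(f n).re| with hr
  set s : ℕ → ℝ := fun n => Complex.normSq (f n) with hs
  have hrpos : ∀ n, 0 < r n := fun n => abs_pos.mpr (hre n)
  have hspos : ∀ n, 0 < s n := fun n => Complex.normSq_pos.mpr (hne n)
  have hrstep : ∀ n, r (n + 1) = r n * (1 + 1 / s n) := by
    intro n
    have h1 : 0 < 1 + 1 / s n := by
      have := one_div_pos.mpr (hspos n); linarith
    rw [hr]
    simp only [hstep n, P0_re, abs_mul, abs_of_pos h1]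
    exact congrArg (|(f n).re| * ·) (abs_of_pos h1)
  have hsstep : ∀ n, s (n + 1) = s n - 2 + (4 * (f n).re ^ 2 + 1) / s n := by
    intro n
    rw [hs]; simp only [hstep n]; exact P0_normSq (f n) (hne n)
  have hrmono : Monotone r := by
    apply monotone_nat_of_le_succ
    intro n
    rw [hrstep n]
    nlinarith [hrpos n, hspos n, div_pos one_pos (hspos n)]
  have hx2 : ∀ n, (f n).re ^ 2 = r n ^ 2 := fun n => (sq_abs _).symm
  -- r is unbounded
  have hunb : ∀ M : ℝ, ∃ n, M ≤ r n := by
    intro M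
    by_contra hcon
    push_neg at hcon
    set a := r 0 with ha
    have ha0 : 0 < a := hrpos 0
    have haM : a < M := hcon 0
    set B : ℝ := max (s 0) ((4 * M ^ 2 + 1) * (1 + 1 / a ^ 2)) with hB
    have hB0 : 0 < B := lt_of_lt_of_le (hspos 0) (le_max_left _ _)
    have hra : ∀ n, a ≤ r n := fun n => hrmono (Nat.zero_le n)
    have hsB : ∀ n, s n ≤ B := by
      intro n
      induction n with
      | zero => exact le_max_left _ _
      | succ n ih =>
        have hx : (f n).re ^ 2 ≤ M ^ 2 := by
          rw [hx2 n]
          have : r n ≤ M := (hcon n).le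
          nlinarith [hrpos n]
        have hsa : a ^ 2 ≤ s n := by
          have : r n ^ 2 ≤ s n := by
            rw [← hx2 n, hs]
            have := Complex.normSq_apply (f n)
            nlinarith [sq_nonneg (f n).im]
          nlinarith [hra n, ha0, hrpos n]
        rw [hsstep n]
        rcases le_or_gt (4 * M ^ 2 + 1) (s n) with h | h
        · have h1 : (4 * (f n).re ^ 2 + 1) / s n ≤ 1 := by
            rw [div_le_one (hspos n)]
            nlinarith
          linarith
        · have h1 : (4 * (f n).re ^ 2 + 1) / s n ≤ (4 * M ^ 2 + 1) / a ^ 2 := by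
            apply div_le_div₀ (by positivity) (by nlinarith) (by positivity) hsa
          have h2 : (4 * M ^ 2 + 1) + (4 * M ^ 2 + 1) / a ^ 2 ≤ B := by
            have : (4 * M ^ 2 + 1) * (1 + 1 / a ^ 2) ≤ B := le_max_right _ _
            have he : (4 * M ^ 2 + 1) * (1 + 1 / a ^ 2)
                = (4 * M ^ 2 + 1) + (4 * M ^ 2 + 1) / a ^ 2 := by
              field_simp
            linarith [he ▸ this]
          linarith
    -- linear growth of r
    have hlin : ∀ n : ℕ, a + n * (a / B) ≤ r n := by
      intro n
      induction n with
      | zero => norm_num [ha]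
      | succ n ih =>
        have h1 : a / B ≤ r n / s n := by
          rw [div_le_div_iff₀ hB0 (hspos n)]
          nlinarith [hra n, hsB n, ha0, hspos n, hB0]
        have h2 : r n + a / B ≤ r n * (1 + 1 / s n) := by
          have hsn : s n ≠ 0 := (hspos n).ne'
          have : r n * (1 + 1 / s n) = r n + r n / s n := by
            field_simp
          linarith
        rw [hrstep n]
        push_cast
        nlinarith
    obtain ⟨n, hn⟩ := exists_nat_gt ((M - a) * (B / a))
    have h3 := hlin n
    have h4 := hcon n
    have haB : 0 < a / B := div_pos ha0 hB0
    have h5 : (n : ℝ) * (a / B) < M - a := by linarith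
    have h6 : (M - a) * (B / a) * (a / B) < (n : ℝ) * (a / B) :=
      mul_lt_mul_of_pos_right hn haB
    have h7 : (M - a) * (B / a) * (a / B) = M - a := by field_simp
    linarith
  have hrtend : Tendsto r atTop atTop :=
    tendsto_atTop_atTop_of_monotone hrmono (fun b => hunb b)
  apply tendsto_atTop_mono (fun n => ?_) hrtend
  exact Complex.abs_re_le_norm (f n)
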